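/- Let ω(E) = ∑_{n=1}^∞ 2ⁿ m(E ∩ [2ⁿ, 2^{n+1}]) and σ(E) = m(E ∩ [0,1]), where m is Lebesgue measure on ℝ. Then the one-tailed condition A_2^{t1}(ω,σ) = sup_I (ω(I)/|I|) P(I,σ) is finite, but the two-tailed condition fails: P([0,1],ω) · P([0,1],σ) = ∞. -/

import Mathlib

open MeasureTheory ENNReal

/-- An interval in `ℝ` given by its center and (positive) half-length. -/
structure RInterval where
  c : ℝ
  r : ℝ
  hr : 0 < r

namespace RInterval

def set (I : RInterval) : Set ℝ := Set.Ico (I.c - I.r) (I.c + I.r)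

noncomputable def len (I : RInterval) : ℝ := 2 * I.r

end RInterval

/-- The one-dimensional Poisson integral `P(I,ω) = ∫ |I|/(|I|+dist(x,I))² dω(x)`. -/
noncomputable def poisson (I : RInterval) (ω : Measure ℝ) : ℝ≥0∞ :=
  ∫⁻ x, ENNReal.ofReal (I.len / (I.len + Metric.infDist x I.set) ^ 2) ∂ω


/-- The measure `ω(E) = ∑_{n≥1} 2ⁿ m(E ∩ [2ⁿ, 2^{n+1}])`. -/
noncomputable def omegaMeas : Measure ℝ :=
  Measure.sum (fun k : ℕ => ((2 : ℝ≥0∞) ^ (k + 1)) •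
    volume.restrict (Set.Ico ((2:ℝ) ^ (k + 1)) ((2:ℝ) ^ (k + 2))))

/-- The measure `σ(E) = m(E ∩ [0,1])`. -/
noncomputable def sigmaMeas : Measure ℝ := volume.restrict (Set.Ico (0:ℝ) 1)

/-- The unit interval `[0,1)` as an `RInterval`. -/
noncomputable def unitInterval' : RInterval := ⟨1/2, 1/2, by norm_num⟩

/- ### Auxiliary lemmas -/

lemma le_infDist' {x d : ℝ} {s : Set ℝ} (hs : s.Nonempty) (h : ∀ y ∈ s, d ≤ dist x y) :
    d ≤ Metric.infDist x s := by
  by_contra hlt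
  push_neg at hlt
  obtain ⟨y, hy, hd⟩ := (Metric.infDist_lt_iff hs).1 hlt
  exact absurd (h y hy) (not_le.2 hd)

lemma Ak_pairwise : Pairwise (Function.onFun Disjoint
    (fun k : ℕ => Set.Ico ((2:ℝ) ^ (k + 1)) ((2:ℝ) ^ (k + 2)))) := by
  intro i j hij
  rw [Function.onFun, Set.Ico_disjoint_Ico]
  rcases hij.lt_or_gt with h | h
  · calc min ((2:ℝ)^(i+2)) ((2:ℝ)^(j+2)) ≤ (2:ℝ)^(i+2) := min_le_left _ _
      _ ≤ (2:ℝ)^(j+1) := by apply pow_le_pow_right₀ (by norm_num); omega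
      _ ≤ max ((2:ℝ)^(i+1)) ((2:ℝ)^(j+1)) := le_max_right _ _
  · calc min ((2:ℝ)^(i+2)) ((2:ℝ)^(j+2)) ≤ (2:ℝ)^(j+2) := min_le_right _ _
      _ ≤ (2:ℝ)^(i+1) := by apply pow_le_pow_right₀ (by norm_num); omega
      _ ≤ max ((2:ℝ)^(i+1)) ((2:ℝ)^(j+1)) := le_max_left _ _

lemma omega_le (a b : ℝ) :
    omegaMeas (Set.Ico a b) ≤ ENNReal.ofReal b * volume (Set.Ico a b ∩ Set.Ici 2) := by
  rw [omegaMeas, Measure.sum_apply _ measurableSet_Ico]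
  have key : ∀ k : ℕ, (((2 : ℝ≥0∞) ^ (k + 1)) • volume.restrict
      (Set.Ico ((2:ℝ) ^ (k + 1)) ((2:ℝ) ^ (k + 2)))) (Set.Ico a b)
      ≤ ENNReal.ofReal b * volume (Set.Ico a b ∩ Set.Ico ((2:ℝ)^(k+1)) ((2:ℝ)^(k+2))) := by
    intro k
    rw [Measure.smul_apply, smul_eq_mul, Measure.restrict_apply measurableSet_Ico]
    by_cases hkb : (2:ℝ)^(k+1) ≤ b
    · apply mul_le_mul_left
      rw [show ((2:ℝ≥0∞)^(k+1)) = ENNReal.ofReal ((2:ℝ)^(k+1)) by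
        rw [ENNReal.ofReal_pow (by norm_num)]; norm_num]
      exact ENNReal.ofReal_le_ofReal hkb
    · have : Set.Ico a b ∩ Set.Ico ((2:ℝ)^(k+1)) ((2:ℝ)^(k+2)) = ∅ := by
        ext x; simp only [Set.mem_inter_iff, Set.mem_Ico, Set.mem_empty_iff_false, iff_false]
        rintro ⟨⟨_, h1⟩, h2, _⟩; exact hkb (le_of_lt (lt_of_le_of_lt h2 h1))
      rw [this]; simp
  calc ∑' k, (((2 : ℝ≥0∞) ^ (k + 1)) • volume.restrict
        (Set.Ico ((2:ℝ) ^ (k + 1)) ((2:ℝ) ^ (k + 2)))) (Set.Ico a b)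
      ≤ ∑' k, ENNReal.ofReal b *
        volume (Set.Ico a b ∩ Set.Ico ((2:ℝ)^(k+1)) ((2:ℝ)^(k+2))) := ENNReal.tsum_le_tsum key
    _ = ENNReal.ofReal b * ∑' k,
        volume (Set.Ico a b ∩ Set.Ico ((2:ℝ)^(k+1)) ((2:ℝ)^(k+2))) := ENNReal.tsum_mul_left
    _ ≤ ENNReal.ofReal b * volume (Set.Ico a b ∩ Set.Ici 2) := by
        apply mul_le_mul_right
        rw [← measure_iUnion (Ak_pairwise.mono fun i j h => (h.inter_left' _).inter_right' _)
          (fun k => measurableSet_Ico.inter measurableSet_Ico)]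
        apply measure_mono
        simp only [Set.iUnion_subset_iff]
        intro k x hx
        refine ⟨hx.1, le_trans ?_ hx.2.1⟩
        calc (2:ℝ) = 2^1 := by norm_num
          _ ≤ 2^(k+1) := pow_le_pow_right₀ (by norm_num) (by omega)

lemma poisson_sigma_le (I : RInterval) :
    poisson I sigmaMeas ≤
      ENNReal.ofReal (I.len / (I.len + max (I.c - I.r - 1) 0) ^ 2) := by
  have hL : 0 < I.len := by have := I.hr; unfold RInterval.len; linarith
  have hne : I.set.Nonempty := by
    refine ⟨I.c, ?_⟩
    simp only [RInterval.set, Set.mem_Ico]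
    constructor <;> [linarith [I.hr]; linarith [I.hr]]
  calc poisson I sigmaMeas
      = ∫⁻ x in Set.Ico (0:ℝ) 1,
          ENNReal.ofReal (I.len / (I.len + Metric.infDist x I.set) ^ 2) ∂volume := rfl
    _ ≤ ∫⁻ _ in Set.Ico (0:ℝ) 1,
          ENNReal.ofReal (I.len / (I.len + max (I.c - I.r - 1) 0) ^ 2) ∂volume := by
        apply setLIntegral_mono' measurableSet_Ico
        intro x hx
        apply ENNReal.ofReal_le_ofReal
        have hd0 : 0 ≤ Metric.infDist x I.set := Metric.infDist_nonneg
        have hD : max (I.c - I.r - 1) 0 ≤ Metric.infDist x I.set := by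
          apply max_le _ hd0
          rcases le_or_gt (I.c - I.r) 1 with h1 | h1
          · linarith
          · apply le_infDist' hne
            intro y hy
            simp only [RInterval.set, Set.mem_Ico] at hy
            have hx1 : x < 1 := hx.2
            have : y - x ≤ |x - y| := by rw [abs_sub_comm]; exact le_abs_self _
            rw [Real.dist_eq]
            linarith [hy.1]
        gcongr
    _ = ENNReal.ofReal (I.len / (I.len + max (I.c - I.r - 1) 0) ^ 2) * volume (Set.Ico (0:ℝ) 1) :=
        setLIntegral_const _ _
    _ = ENNReal.ofReal (I.len / (I.len + max (I.c - I.r - 1) 0) ^ 2) := by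
        rw [Real.volume_Ico]; norm_num

lemma real_key (a L b m D : ℝ) (hL : 0 < L) (hb : 2 < b) (hab : b = a + L)
    (hm1 : m ≤ L) (hm2 : m ≤ b - 2) (hD : D = max (a-1) 0) :
    b * m ≤ 3 * (L + D)^2 := by
  rcases le_or_gt a 1 with h1 | h1
  · have hD0 : D = 0 := by rw [hD]; exact max_eq_right (by linarith)
    subst hD0
    nlinarith [sq_nonneg (b-1)]
  · have hD0 : D = a - 1 := by rw [hD]; exact max_eq_left (by linarith)
    subst hD0
    rcases le_or_gt 2 a with h2 | h2
    · nlinarith [sq_nonneg (L + a - 1)]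
    · nlinarith [sq_nonneg (L + a - 1)]

lemma Qbound (I : RInterval) :
    (omegaMeas I.set / ENNReal.ofReal I.len) * poisson I sigmaMeas ≤ ENNReal.ofReal 3 := by
  set a := I.c - I.r with ha
  set b := I.c + I.r with hb
  have hL : 0 < I.len := by have := I.hr; unfold RInterval.len; linarith
  have hba : b - a = I.len := by rw [ha, hb, RInterval.len]; ring
  have hset : I.set = Set.Ico a b := rfl
  rcases le_or_gt b 2 with h2 | h2
  · -- ω(I) = 0
    have hempty : Set.Ico a b ∩ Set.Ici 2 = ∅ := by
      ext x
      simp only [Set.mem_inter_iff, Set.mem_Ico, Set.mem_Ici, Set.mem_empty_iff_false, iff_false]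
      rintro ⟨⟨_, h1⟩, hge⟩
      linarith
    have hω : omegaMeas I.set = 0 := by
      refine le_antisymm ?_ zero_le
      calc omegaMeas I.set ≤ ENNReal.ofReal b * volume (Set.Ico a b ∩ Set.Ici 2) := by
            rw [hset]; exact omega_le a b
        _ = 0 := by rw [hempty]; simp
    rw [hω, ENNReal.zero_div, zero_mul]
    exact zero_le
  · set D := max (a - 1) 0 with hD
    set m := min I.len (b - 2) with hm
    have hm0 : 0 < m := lt_min hL (by linarith)
    have hvol : volume (Set.Ico a b ∩ Set.Ici 2) ≤ ENNReal.ofReal m := by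
      rcases min_cases I.len (b-2) with ⟨hmin, _⟩ | ⟨hmin, _⟩ <;> rw [hm, hmin]
      · calc volume (Set.Ico a b ∩ Set.Ici 2) ≤ volume (Set.Ico a b) :=
              measure_mono Set.inter_subset_left
          _ = ENNReal.ofReal I.len := by rw [Real.volume_Ico, hba]
      · calc volume (Set.Ico a b ∩ Set.Ici 2) ≤ volume (Set.Ico (2:ℝ) b) := by
              apply measure_mono
              rintro x ⟨⟨_, hxb⟩, hx2⟩
              exact ⟨hx2, hxb⟩
          _ = ENNReal.ofReal (b - 2) := Real.volume_Ico
    have hω : omegaMeas I.set ≤ ENNReal.ofReal (b * m) := by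
      calc omegaMeas I.set ≤ ENNReal.ofReal b * volume (Set.Ico a b ∩ Set.Ici 2) := by
            rw [hset]; exact omega_le a b
        _ ≤ ENNReal.ofReal b * ENNReal.ofReal m := mul_le_mul_right hvol _
        _ = ENNReal.ofReal (b * m) := (ENNReal.ofReal_mul (by linarith)).symm
    calc (omegaMeas I.set / ENNReal.ofReal I.len) * poisson I sigmaMeas
        ≤ (ENNReal.ofReal (b * m) / ENNReal.ofReal I.len) *
          ENNReal.ofReal (I.len / (I.len + D) ^ 2) :=
          mul_le_mul' (ENNReal.div_le_div_right hω _) (poisson_sigma_le I)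
      _ = ENNReal.ofReal (b * m / I.len * (I.len / (I.len + D) ^ 2)) := by
          rw [← ENNReal.ofReal_div_of_pos hL, ← ENNReal.ofReal_mul (by positivity)]
      _ ≤ ENNReal.ofReal 3 := by
          apply ENNReal.ofReal_le_ofReal
          have hD0 : 0 ≤ D := le_max_right _ _
          have hkey : b * m ≤ 3 * (I.len + D)^2 :=
            real_key a I.len b m D hL h2 (by linarith) (min_le_left _ _) (min_le_right _ _) hD
          have heq : b * m / I.len * (I.len / (I.len + D) ^ 2) = b * m / (I.len + D)^2 := by
            field_simp
          rw [heq, div_le_iff₀ (by positivity)]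
          linarith

lemma unit_set : unitInterval'.set = Set.Ico (0:ℝ) 1 := by
  simp only [RInterval.set, unitInterval']
  norm_num

lemma unit_len : unitInterval'.len = 1 := by
  simp only [RInterval.len, unitInterval']
  norm_num

lemma poisson_unit_sigma : (1:ℝ≥0∞) ≤ poisson unitInterval' sigmaMeas := by
  rw [poisson, unit_set, unit_len, sigmaMeas]
  calc (1:ℝ≥0∞) = 1 * volume (Set.Ico (0:ℝ) 1) := by rw [Real.volume_Ico]; norm_num
    _ = ∫⁻ _ in Set.Ico (0:ℝ) 1, (1:ℝ≥0∞) ∂volume := (setLIntegral_const _ _).symm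
    _ ≤ ∫⁻ x in Set.Ico (0:ℝ) 1,
        ENNReal.ofReal (1 / (1 + Metric.infDist x (Set.Ico (0:ℝ) 1)) ^ 2) ∂volume := by
      apply setLIntegral_mono' measurableSet_Ico
      intro x hx
      rw [Metric.infDist_zero_of_mem hx]
      norm_num

lemma poisson_unit_omega : poisson unitInterval' omegaMeas = ⊤ := by
  apply top_le_iff.mp
  rw [poisson, unit_set, unit_len, omegaMeas, lintegral_sum_measure]
  have key : ∀ k : ℕ, ENNReal.ofReal (1/16) ≤
      ∫⁻ x, ENNReal.ofReal (1 / (1 + Metric.infDist x (Set.Ico (0:ℝ) 1)) ^ 2)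
        ∂(((2 : ℝ≥0∞) ^ (k + 1)) •
          volume.restrict (Set.Ico ((2:ℝ) ^ (k + 1)) ((2:ℝ) ^ (k + 2)))) := by
    intro k
    rw [lintegral_smul_measure]
    have hint : ENNReal.ofReal (1 / (1 + (2:ℝ)^(k+2)) ^ 2) * ENNReal.ofReal ((2:ℝ)^(k+1)) ≤
        ∫⁻ x in Set.Ico ((2:ℝ) ^ (k + 1)) ((2:ℝ) ^ (k + 2)),
          ENNReal.ofReal (1 / (1 + Metric.infDist x (Set.Ico (0:ℝ) 1)) ^ 2) ∂volume := by
      calc ENNReal.ofReal (1 / (1 + (2:ℝ)^(k+2)) ^ 2) * ENNReal.ofReal ((2:ℝ)^(k+1))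
          = ENNReal.ofReal (1 / (1 + (2:ℝ)^(k+2)) ^ 2) *
            volume (Set.Ico ((2:ℝ) ^ (k + 1)) ((2:ℝ) ^ (k + 2))) := by
            rw [Real.volume_Ico]
            congr 1
            congr 1
            ring
        _ = ∫⁻ _ in Set.Ico ((2:ℝ) ^ (k + 1)) ((2:ℝ) ^ (k + 2)),
              ENNReal.ofReal (1 / (1 + (2:ℝ)^(k+2)) ^ 2) ∂volume := (setLIntegral_const _ _).symm
        _ ≤ _ := by
            apply setLIntegral_mono' measurableSet_Ico
            intro x hx
            apply ENNReal.ofReal_le_ofReal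
            have hd : Metric.infDist x (Set.Ico (0:ℝ) 1) ≤ (2:ℝ)^(k+2) := by
              have h0 : (0:ℝ) ∈ Set.Ico (0:ℝ) 1 := by norm_num
              refine le_trans (Metric.infDist_le_dist_of_mem h0) ?_
              rw [Real.dist_eq, sub_zero, abs_of_nonneg]
              · exact hx.2.le
              · have : (0:ℝ) < 2^(k+1) := by positivity
                linarith [hx.1]
            have hd0 : 0 ≤ Metric.infDist x (Set.Ico (0:ℝ) 1) := Metric.infDist_nonneg
            gcongr
    calc ENNReal.ofReal (1/16)
        ≤ ENNReal.ofReal ((2:ℝ)^(k+1) * (1 / (1 + (2:ℝ)^(k+2)) ^ 2 * (2:ℝ)^(k+1))) := by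
          apply ENNReal.ofReal_le_ofReal
          have hp : (1:ℝ) ≤ 2^(k+1) := one_le_pow₀ (by norm_num)
          have he : (2:ℝ)^(k+2) = 2 * 2^(k+1) := by ring
          have hq : (2:ℝ)^(k+1) * (1/(1+2*2^(k+1))^2 * 2^(k+1))
              = ((2:ℝ)^(k+1)*2^(k+1))/(1+2*2^(k+1))^2 := by ring
          rw [he, hq, le_div_iff₀ (by positivity)]
          nlinarith [hp]
        _ = ENNReal.ofReal ((2:ℝ)^(k+1)) *
            (ENNReal.ofReal (1 / (1 + (2:ℝ)^(k+2)) ^ 2) * ENNReal.ofReal ((2:ℝ)^(k+1))) := by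
          rw [ENNReal.ofReal_mul (by positivity), ENNReal.ofReal_mul (by positivity)]
        _ ≤ ENNReal.ofReal ((2:ℝ)^(k+1)) * ∫⁻ x in Set.Ico ((2:ℝ)^(k+1)) ((2:ℝ)^(k+2)),
              ENNReal.ofReal (1 / (1 + Metric.infDist x (Set.Ico (0:ℝ) 1)) ^ 2) ∂volume :=
          mul_le_mul_right hint _
        _ = _ := by
          congr 1
          rw [ENNReal.ofReal_pow (by norm_num)]
          norm_num
  calc (⊤:ℝ≥0∞) = ∑' _ : ℕ, ENNReal.ofReal (1/16) :=
        (ENNReal.tsum_const_eq_top_of_ne_zero (by simp)).symm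
    _ ≤ _ := ENNReal.tsum_le_tsum key

/-- For `ω = ∑ 2ⁿ m|_{[2ⁿ,2^{n+1}]}` and `σ = m|_{[0,1]}`, the one-tailed
`A_2^{t1}(ω,σ)` characteristic is finite, but the two-tailed condition fails at `I = [0,1]`. -/
theorem stmt_7 :
    (⨆ I : RInterval, (omegaMeas I.set / ENNReal.ofReal I.len) * poisson I sigmaMeas) < ⊤ ∧
    poisson unitInterval' omegaMeas * poisson unitInterval' sigmaMeas = ⊤ := by
  constructor
  · exact lt_of_le_of_lt (iSup_le fun I => Qbound I) ENNReal.ofReal_lt_top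
  · rw [poisson_unit_omega, ENNReal.top_mul]
    exact (lt_of_lt_of_le zero_lt_one poisson_unit_sigma).ne'
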